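/- arXiv:2408.12001 — 2 statements merged into one kernel-verified Lean document; each statement's English description precedes it below -/
import Mathlib

section
/- (VCG is not rank-guaranteed.) For every N ≥ 4 there exist a set S of M = 2 items {a, c}, a valuation profile v = (v¹,…,vᴺ) with values in [0,1], and an efficient assignment b* allocating all items, such that R_VCG(v; b*) = 0 while Rᵏ_𝓜(v) ≥ 1 for the menu 𝓜 = {{a},{c},{a,c}} and every k with 2 ≤ k ≤ N − 2. -/
open MeasureTheory
open scoped ENNReal BigOperators

namespace RankGuaranteedAuctions

/-- A bundle of items, where the set of items is `Fin M`. -/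
abbrev Bundle (M : ℕ) := Finset (Fin M)

/-- A valuation assigns a real value to every bundle. -/
abbrev Valuation (M : ℕ) := Bundle M → ℝ

/-- A valuation is normalized: value `0` for the empty bundle and values in `[0, vbar]`. -/
def IsValuation (M : ℕ) (vbar : ℝ) (v : Valuation M) : Prop :=
  v ∅ = 0 ∧ ∀ b : Bundle M, 0 ≤ v b ∧ v b ≤ vbar

/-- A menu is a nonempty collection of nonempty bundles. -/
def IsMenu (M : ℕ) (Menu : Finset (Bundle M)) : Prop :=
  Menu.Nonempty ∧ ∅ ∉ Menu

/-- The complete menu `2^S` of all nonempty bundles. -/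
noncomputable def completeMenu (M : ℕ) : Finset (Bundle M) :=
  Finset.univ.erase ∅

/-- A feasible allocation: a set of pairwise disjoint bundles from the menu. -/
def Feasible (M : ℕ) (Menu X : Finset (Bundle M)) : Prop :=
  X ⊆ Menu ∧ ∀ b ∈ X, ∀ b' ∈ X, b ≠ b' → Disjoint b b'

/-- The maximum of `∑ b ∈ X, f b` over feasible allocations `X` from the menu. -/
noncomputable def maxAlloc (M : ℕ) (Menu : Finset (Bundle M)) (f : Bundle M → ℝ) : ℝ :=
  sSup {y : ℝ | ∃ X : Finset (Bundle M), Feasible M Menu X ∧ y = ∑ b ∈ X, f b}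

/-- The `k`-th highest value among `w 0, …, w (N-1)` (for `1 ≤ k ≤ N`):
the maximum over sets `T` of `k` bidders of the minimum of `w` on `T`. -/
noncomputable def kthHighest (N : ℕ) (w : Fin N → ℝ) (k : ℕ) : ℝ :=
  sSup {x : ℝ | ∃ T : Finset (Fin N), T.card = k ∧ x = sInf (w '' (T : Set (Fin N)))}

/-- The `k`-th rank guarantee `R^k_𝓜(v)`. -/
noncomputable def rankGuarantee (M N : ℕ) (Menu : Finset (Bundle M))
    (v : Fin N → Valuation M) (k : ℕ) : ℝ :=
  maxAlloc M Menu fun b => kthHighest N (fun n => v n b) k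

/-- The ex-post efficient surplus: the maximum over feasible allocations `X` with
`|X| ≤ N` and injective assignments `ι` of bundles in `X` to bidders of the total value. -/
noncomputable def surplusEx (M N : ℕ) (Menu : Finset (Bundle M))
    (v : Fin N → Valuation M) : ℝ :=
  sSup {y : ℝ | ∃ X : Finset (Bundle M), Feasible M Menu X ∧ X.card ≤ N ∧
    ∃ ι : Bundle M → Fin N, Set.InjOn ι ↑X ∧ y = ∑ b ∈ X, v (ι b) b}

/-- The average `F̄ = (1/N) ∑ₙ Fₙ` of the bidder-marginals of `F`. -/
noncomputable def avgMarginal (M N : ℕ) (F : Measure (Fin N → Valuation M)) :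
    Measure (Valuation M) :=
  (N : ℝ≥0∞)⁻¹ • ∑ n : Fin N, F.map (fun v => v n)

/-- The ex-ante efficient surplus `V_𝓜(F)`. -/
noncomputable def Vsurplus (M N : ℕ) (Menu : Finset (Bundle M))
    (F : Measure (Fin N → Valuation M)) : ℝ :=
  ∫ v, surplusEx M N Menu v ∂F

/-- A Borel probability measure on valuation profiles (supported on profiles of
valuations bounded by `vbar`). -/
def ProfileOK (M N : ℕ) (vbar : ℝ) (F : Measure (Fin N → Valuation M)) : Prop :=
  IsProbabilityMeasure F ∧ F {v | ∀ n, IsValuation M vbar (v n)} = 1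

/-- A Borel probability measure on valuations (supported on valuations bounded by `vbar`). -/
def ValOK (M : ℕ) (vbar : ℝ) (G : Measure (Valuation M)) : Prop :=
  IsProbabilityMeasure G ∧ G {w | IsValuation M vbar w} = 1

/-- `κ` is a partition of the bundle `b` into nonempty, pairwise disjoint parts. -/
def IsPartitionOf (M : ℕ) (κ : Finset (Bundle M)) (b : Bundle M) : Prop :=
  (∀ c ∈ κ, c ≠ ∅) ∧ (∀ c ∈ κ, ∀ c' ∈ κ, c ≠ c' → Disjoint c c') ∧ κ.sup id = b

/-- Feasibility for homogeneous goods: total number of allocated items is at most `M`. -/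
def FeasibleQ (M : ℕ) (Menu X : Finset (Bundle M)) : Prop :=
  X ⊆ Menu ∧ ∑ b ∈ X, b.card ≤ M

/-- The maximum of `∑ b ∈ X, f b` over homogeneous-goods-feasible allocations `X`. -/
noncomputable def maxAllocQ (M : ℕ) (Menu : Finset (Bundle M)) (f : Bundle M → ℝ) : ℝ :=
  sSup {y : ℝ | ∃ X : Finset (Bundle M), FeasibleQ M Menu X ∧ y = ∑ b ∈ X, f b}

/-- An assignment of pairwise disjoint bundles to the `N` bidders. -/
def IsAssignment (M N : ℕ) (a : Fin N → Bundle M) : Prop :=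
  ∀ n n' : Fin N, n ≠ n' → Disjoint (a n) (a n')

/-- An assignment is efficient if it maximizes total value over all assignments. -/
def IsEfficient (M N : ℕ) (v : Fin N → Valuation M) (a : Fin N → Bundle M) : Prop :=
  IsAssignment M N a ∧
    ∀ a' : Fin N → Bundle M, IsAssignment M N a' → ∑ n, v n (a' n) ≤ ∑ n, v n (a n)

/-- The VCG revenue at the efficient assignment `a`: the sum over bidders `n` of
`max_{assignments to bidders other than n} ∑_{n' ≠ n} v^{n'} − ∑_{n' ≠ n} v^{n'}(a n')`. -/
noncomputable def vcgRevenue (M N : ℕ) (v : Fin N → Valuation M)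
    (a : Fin N → Bundle M) : ℝ :=
  ∑ n : Fin N,
    (sSup {y : ℝ | ∃ a' : Fin N → Bundle M, IsAssignment M N a' ∧ a' n = ∅ ∧
        y = ∑ n' ∈ Finset.univ.erase n, v n' (a' n')}
      - ∑ n' ∈ Finset.univ.erase n, v n' (a n'))

/-- An unbounded valuation: value `0` for the empty bundle and nonnegative values. -/
def IsValuationNN (M : ℕ) (v : Valuation M) : Prop :=
  v ∅ = 0 ∧ ∀ b : Bundle M, 0 ≤ v b

/-- The top-`(k-1)/N` quantile of `v b` under `G`. -/
noncomputable def quantileQ (M N k : ℕ) (G : Measure (Valuation M)) (b : Bundle M) : ℝ :=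
  sInf {q : ℝ | 0 ≤ q ∧ G {w | q < w b} ≤ ((k - 1 : ℕ) : ℝ≥0∞) / (N : ℝ≥0∞)}


/-! ### Auxiliary construction for Statement 14 -/

/-- Indicator valuation of containing item `s`. -/
def uu (s : Fin 2) : Bundle 2 → ℝ := fun b => if s ∈ b then 1 else 0

/-- The example valuation profile: bidder 0 wants item 0, bidder 1 wants item 1,
everybody else wants only the full bundle. -/
def myV (N : ℕ) : Fin N → Valuation 2 := fun n b =>
  if n.val = 0 then uu 0 b
  else if n.val = 1 then uu 1 b
  else if b = {0, 1} then 1 else 0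

/-- The example efficient assignment. -/
def myA (N : ℕ) : Fin N → Bundle 2 := fun n =>
  if n.val = 0 then {0} else if n.val = 1 then {1} else ∅

lemma uu_nonneg (s : Fin 2) (b : Bundle 2) : 0 ≤ uu s b := by
  unfold uu; split_ifs <;> norm_num

lemma empty_ne_pair : (∅ : Bundle 2) ≠ {0, 1} := by decide

lemma myV_empty {N : ℕ} (n : Fin N) : myV N n ∅ = 0 := by
  unfold myV uu
  split_ifs with h1 h2 h3 <;> simp_all <;> exact empty_ne_pair ‹_›

lemma myV_le_sum {N : ℕ} (n : Fin N) (b : Bundle 2) :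
    myV N n b ≤ uu 0 b + uu 1 b := by
  unfold myV uu
  split_ifs with h1 h2 h3 h4 h5 h6 h7 h8 h9 <;> subst_vars <;> simp_all <;> norm_num

lemma myV_le_uu1 {N : ℕ} {n : Fin N} (hn : n.val ≠ 0) (b : Bundle 2) :
    myV N n b ≤ uu 1 b := by
  unfold myV uu
  split_ifs with h1 h2 h3 h4 h5 <;> subst_vars <;> simp_all

lemma myV_le_uu0 {N : ℕ} {n : Fin N} (hn : n.val ≠ 1) (b : Bundle 2) :
    myV N n b ≤ uu 0 b := by
  unfold myV uu
  split_ifs with h1 h2 h3 h4 h5 <;> subst_vars <;> simp_all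

/-- For an assignment (pairwise disjoint bundles), each item is in at most one bundle. -/
lemma sum_uu_le {N : ℕ} (a' : Fin N → Bundle 2) (h : IsAssignment 2 N a')
    (s : Fin 2) (t : Finset (Fin N)) : ∑ n ∈ t, uu s (a' n) ≤ 1 := by
  have h1 : ∑ n ∈ t, uu s (a' n) ≤ ∑ n : Fin N, uu s (a' n) :=
    Finset.sum_le_sum_of_subset_of_nonneg (Finset.subset_univ t)
      (fun n _ _ => uu_nonneg s (a' n))
  have h2 : ∑ n : Fin N, uu s (a' n)
      = ((Finset.univ.filter (fun n => s ∈ a' n)).card : ℝ) := by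
    simp [uu, Finset.sum_boole]
  have h3 : (Finset.univ.filter (fun n => s ∈ a' n)).card ≤ 1 := by
    refine Finset.card_le_one.mpr ?_
    intro n hn m hm
    by_contra hne
    have hd := h n m hne
    exact (Finset.disjoint_left.mp hd (by simpa using hn)) (by simpa using hm)
  calc ∑ n ∈ t, uu s (a' n) ≤ _ := h1
    _ = _ := h2
    _ ≤ 1 := by exact_mod_cast h3

lemma myA_isAssignment (N : ℕ) : IsAssignment 2 N (myA N) := by
  intro n m hne
  unfold myA
  have : ¬(n.val = 0 ∧ m.val = 0) := fun ⟨h1, h2⟩ => hne (Fin.ext (h1.trans h2.symm))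
  have : ¬(n.val = 1 ∧ m.val = 1) := fun ⟨h1, h2⟩ => hne (Fin.ext (h1.trans h2.symm))
  split_ifs <;> simp_all <;> decide

lemma sum_myV_myA {N : ℕ} (hN : 4 ≤ N) :
    ∑ n : Fin N, myV N n (myA N n) = 2 := by
  have h0 : (0 : ℕ) < N := by omega
  have h1 : (1 : ℕ) < N := by omega
  set i0 : Fin N := ⟨0, h0⟩ with hi0
  set i1 : Fin N := ⟨1, h1⟩ with hi1
  have hne : i0 ≠ i1 := by simp [hi0, hi1, Fin.ext_iff]
  have hsub : ({i0, i1} : Finset (Fin N)) ⊆ Finset.univ := Finset.subset_univ _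
  have hz : ∀ n ∈ Finset.univ, n ∉ ({i0, i1} : Finset (Fin N)) →
      myV N n (myA N n) = 0 := by
    intro n _ hn
    simp only [Finset.mem_insert, Finset.mem_singleton] at hn
    push_neg at hn
    have hn0 : n.val ≠ 0 := fun h => hn.1 (Fin.ext h)
    have hn1 : n.val ≠ 1 := fun h => hn.2 (Fin.ext h)
    unfold myA
    rw [if_neg hn0, if_neg hn1, myV_empty]
  rw [← Finset.sum_subset hsub hz, Finset.sum_pair hne]
  unfold myA myV uu
  norm_num [hi0, hi1]

lemma myV_value_at {N : ℕ} (n : Fin N) :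
    myV N n (myA N n) = if n.val = 0 ∨ n.val = 1 then 1 else 0 := by
  unfold myA myV uu
  split_ifs with h1 h2 h3 <;> simp_all <;> exact empty_ne_pair ‹_›

/-- Total value of any assignment is at most 2. -/
lemma sum_myV_le_two {N : ℕ} (a' : Fin N → Bundle 2) (h : IsAssignment 2 N a')
    (t : Finset (Fin N)) : ∑ n ∈ t, myV N n (a' n) ≤ 2 := by
  have h1 : ∑ n ∈ t, myV N n (a' n) ≤ ∑ n ∈ t, (uu 0 (a' n) + uu 1 (a' n)) :=
    Finset.sum_le_sum (fun n _ => myV_le_sum n (a' n))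
  rw [Finset.sum_add_distrib] at h1
  have h2 := sum_uu_le a' h 0 t
  have h3 := sum_uu_le a' h 1 t
  linarith

/-- The `k`-th highest of a constant function equals the constant. -/
lemma kthHighest_const (N : ℕ) (k : ℕ) (hk : 1 ≤ k) (hkN : k ≤ N) :
    kthHighest N (fun _ => (1 : ℝ)) k = 1 := by
  unfold kthHighest
  have hset : {x : ℝ | ∃ T : Finset (Fin N), T.card = k ∧
      x = sInf ((fun _ => (1 : ℝ)) '' (T : Set (Fin N)))} = {1} := by
    ext x
    simp only [Set.mem_setOf_eq, Set.mem_singleton_iff]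
    constructor
    · rintro ⟨T, hT, rfl⟩
      have hTne : (T : Set (Fin N)).Nonempty := by
        rw [Finset.coe_nonempty, ← Finset.card_pos, hT]; omega
      rw [Set.Nonempty.image_const hTne, csInf_singleton]
    · rintro rfl
      obtain ⟨T, _, hT⟩ := Finset.exists_subset_card_eq
        (s := (Finset.univ : Finset (Fin N))) (by simpa using hkN)
      refine ⟨T, hT, ?_⟩
      have hTne : (T : Set (Fin N)).Nonempty := by
        rw [Finset.coe_nonempty, ← Finset.card_pos, hT]; omega
      rw [Set.Nonempty.image_const hTne, csInf_singleton]
  rw [hset, csSup_singleton]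

/-- VCG counterfactual supremum for bidders 0 and 1. -/
lemma vcg_sup_small {N : ℕ} (hN : 4 ≤ N) (n : Fin N) (hn : n.val = 0 ∨ n.val = 1) :
    IsGreatest {y : ℝ | ∃ a' : Fin N → Bundle 2, IsAssignment 2 N a' ∧ a' n = ∅ ∧
      y = ∑ n' ∈ Finset.univ.erase n, myV N n' (a' n')} 1 := by
  -- the "other" bidder j gets the "other" item s
  obtain ⟨s, j, hj, hjn, hval, hbound⟩ :
      ∃ (s : Fin 2) (j : Fin N), j.val = s.val ∧ j ≠ n ∧ myV N j {s} = 1 ∧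
        (∀ m : Fin N, m ≠ n → ∀ b, myV N m b ≤ uu s b) := by
    rcases hn with hn | hn
    · refine ⟨1, ⟨1, by omega⟩, rfl, ?_, ?_, ?_⟩
      · simp [Fin.ext_iff, hn]
      · unfold myV uu; norm_num
      · intro m hm b
        exact myV_le_uu1 (fun h => hm (Fin.ext (h.trans hn.symm))) b
    · refine ⟨0, ⟨0, by omega⟩, rfl, ?_, ?_, ?_⟩
      · simp [Fin.ext_iff, hn]
      · unfold myV uu; norm_num
      · intro m hm b
        exact myV_le_uu0 (fun h => hm (Fin.ext (h.trans hn.symm))) b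
  constructor
  · -- 1 is attained
    refine ⟨fun m => if m = j then ({s} : Bundle 2) else ∅, ?_, ?_, ?_⟩
    · intro m m' hne
      by_cases h1 : m = j <;> by_cases h2 : m' = j
      · exact absurd (h1.trans h2.symm) hne
      all_goals simp [h1, h2]
    · show (if n = j then ({s} : Bundle 2) else ∅) = ∅
      rw [if_neg (fun h => hjn h.symm)]
    · rw [Finset.sum_eq_single_of_mem j
        (Finset.mem_erase.mpr ⟨hjn, Finset.mem_univ j⟩)
        (fun m _ hm => by show myV N m (if m = j then _ else _) = 0
                          rw [if_neg hm, myV_empty])]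
      simp [hval]
  · -- 1 is an upper bound
    rintro y ⟨a', ha', _, rfl⟩
    calc ∑ n' ∈ Finset.univ.erase n, myV N n' (a' n')
        ≤ ∑ n' ∈ Finset.univ.erase n, uu s (a' n') := by
          refine Finset.sum_le_sum (fun m hm => ?_)
          exact hbound m (Finset.mem_erase.mp hm).1 (a' m)
      _ ≤ 1 := sum_uu_le a' ha' s _

/-- VCG counterfactual supremum for bidders other than 0 and 1. -/
lemma vcg_sup_big {N : ℕ} (hN : 4 ≤ N) (n : Fin N) (hn0 : n.val ≠ 0) (hn1 : n.val ≠ 1) :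
    IsGreatest {y : ℝ | ∃ a' : Fin N → Bundle 2, IsAssignment 2 N a' ∧ a' n = ∅ ∧
      y = ∑ n' ∈ Finset.univ.erase n, myV N n' (a' n')} 2 := by
  constructor
  · refine ⟨myA N, myA_isAssignment N, ?_, ?_⟩
    · unfold myA; rw [if_neg hn0, if_neg hn1]
    · have hz : myV N n (myA N n) = 0 := by
        rw [myV_value_at]; simp [hn0, hn1]
      rw [Finset.sum_erase (f := fun m => myV N m (myA N m)) Finset.univ hz,
        sum_myV_myA hN]
  · rintro y ⟨a', ha', _, rfl⟩
    exact sum_myV_le_two a' ha' _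

/-- VCG is not rank-guaranteed: for every `N ≥ 4` there are two items, a
valuation profile with values in `[0,1]`, and an efficient assignment allocating all
items, with VCG revenue `0` while `R^k_𝓜(v) ≥ 1` for the menu `𝓜 = {{a},{c},{a,c}}` and
every `2 ≤ k ≤ N − 2`. -/
theorem vcg_not_rank_guaranteed (N : ℕ) (hN : 4 ≤ N) :
    ∃ (v : Fin N → Valuation 2) (a : Fin N → Bundle 2),
      (∀ n, IsValuation 2 1 (v n)) ∧
      IsEfficient 2 N v a ∧ (∀ s : Fin 2, ∃ n, s ∈ a n) ∧
      vcgRevenue 2 N v a = 0 ∧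
      ∀ k : ℕ, 2 ≤ k → k ≤ N - 2 →
        rankGuarantee 2 N ({({0} : Bundle 2), ({1} : Bundle 2), ({0, 1} : Bundle 2)} :
          Finset (Bundle 2)) v k ≥ 1 := by
  refine ⟨myV N, myA N, ?_, ?_, ?_, ?_, ?_⟩
  · -- valuations are normalized with values in [0,1]
    intro n
    refine ⟨myV_empty n, fun b => ?_⟩
    unfold myV uu
    split_ifs <;> norm_num
  · -- efficiency
    refine ⟨myA_isAssignment N, fun a' ha' => ?_⟩
    rw [sum_myV_myA hN]
    exact sum_myV_le_two a' ha' Finset.univ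
  · -- all items allocated
    intro str
    fin_cases str
    · exact ⟨⟨0, by omega⟩, by simp [myA]⟩
    · exact ⟨⟨1, by omega⟩, by simp [myA]⟩
  · -- VCG revenue is zero
    unfold vcgRevenue
    refine Finset.sum_eq_zero (fun n _ => ?_)
    have herase : ∑ n' ∈ Finset.univ.erase n, myV N n' (myA N n')
        = 2 - myV N n (myA N n) := by
      rw [Finset.sum_erase_eq_sub (f := fun m => myV N m (myA N m))
        (Finset.mem_univ n), sum_myV_myA hN]
    by_cases hn : n.val = 0 ∨ n.val = 1
    · rw [(vcg_sup_small hN n hn).csSup_eq, herase, myV_value_at, if_pos hn]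
      ring
    · push_neg at hn
      rw [(vcg_sup_big hN n hn.1 hn.2).csSup_eq, herase, myV_value_at,
        if_neg (by tauto)]
      ring
  · -- rank guarantee at least 1
    intro k hk2 hkN
    unfold rankGuarantee maxAlloc
    set g : Bundle 2 → ℝ := fun b => kthHighest N (fun n => myV N n b) k with hg
    have hbdd : BddAbove {y : ℝ | ∃ X : Finset (Bundle 2),
        Feasible 2 ({({0} : Bundle 2), ({1} : Bundle 2), ({0, 1} : Bundle 2)} :
          Finset (Bundle 2)) X ∧ y = ∑ b ∈ X, g b} := by
      refine ((Set.finite_range (fun X : Finset (Bundle 2) => ∑ b ∈ X, g b)).subset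
        ?_).bddAbove
      rintro y ⟨X, _, rfl⟩
      exact ⟨X, rfl⟩
    have hval : g ({0, 1} : Bundle 2) = 1 := by
      have hconst : (fun n : Fin N => myV N n ({0, 1} : Bundle 2)) =
          fun _ => (1 : ℝ) := by
        funext n
        unfold myV uu
        split_ifs <;> simp_all
      rw [hg]
      simp only [hconst]
      exact kthHighest_const N k (by omega) (by omega)
    have hmem : (1 : ℝ) ∈ {y : ℝ | ∃ X : Finset (Bundle 2),
        Feasible 2 ({({0} : Bundle 2), ({1} : Bundle 2), ({0, 1} : Bundle 2)} :
          Finset (Bundle 2)) X ∧ y = ∑ b ∈ X, g b} := by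
      refine ⟨{({0, 1} : Bundle 2)}, ⟨?_, ?_⟩, ?_⟩
      · intro b hb
        rw [Finset.mem_singleton] at hb
        subst hb
        simp
      · intro b hb b' hb' hne
        rw [Finset.mem_singleton] at hb hb'
        exact absurd (hb.trans hb'.symm) hne
      · rw [Finset.sum_singleton, hval]
    exact le_csSup hbdd hmem

end RankGuaranteedAuctions
end

section
/- (Rank guarantee with unbounded valuations.) Suppose valuations take values in [0, ∞) (with v(∅) = 0, no upper bound v̄). Assume N ≥ |𝓜| + 1 and 2 ≤ k ≤ N, and let 𝔾 be a nonempty set of Borel probability measures on valuations such that E_G[v_b] < ∞ for every G ∈ 𝔾 and every bundle b; let 𝔽 = {F : F̄ ∈ 𝔾}. For G ∈ 𝔾 and a bundle b, let Q_b(G) = inf{ q ≥ 0 : G({v : v_b > q}) ≤ (k−1)/N } be the top-(k−1)/N quantile of v_b under G. Then inf_{F∈𝔽} E_F[Rᵏ_𝓜(v)] ≥ inf_{F∈𝔽} V_𝓜(F) − sup_{G∈𝔾} Σ_{b∈𝓜} ∫_{{v : v_b ≥ Q_b(G)}} v_b dG(v). -/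
open MeasureTheory
open scoped ENNReal BigOperators

namespace RankGuaranteedAuctions

/-! ### auxiliary: finite representations -/

open Classical in
noncomputable def allocFinset (M : ℕ) (Menu : Finset (Bundle M)) : Finset (Finset (Bundle M)) :=
  Finset.univ.filter (fun X => Feasible M Menu X)

lemma mem_allocFinset {M : ℕ} {Menu : Finset (Bundle M)} {X : Finset (Bundle M)} :
    X ∈ allocFinset M Menu ↔ Feasible M Menu X := by
  classical simp [allocFinset]

lemma feasible_empty (M : ℕ) (Menu : Finset (Bundle M)) : Feasible M Menu ∅ := by
  constructor
  · exact Finset.empty_subset _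
  · intro b hb; simp at hb

lemma allocFinset_nonempty (M : ℕ) (Menu : Finset (Bundle M)) :
    (allocFinset M Menu).Nonempty :=
  ⟨∅, mem_allocFinset.2 (feasible_empty M Menu)⟩

lemma maxAlloc_eq_sup' (M : ℕ) (Menu : Finset (Bundle M)) (f : Bundle M → ℝ) :
    maxAlloc M Menu f
      = (allocFinset M Menu).sup' (allocFinset_nonempty M Menu) (fun X => ∑ b ∈ X, f b) := by
  rw [Finset.sup'_eq_csSup_image]
  unfold maxAlloc
  congr 1
  ext y
  simp only [Set.mem_setOf_eq, Set.mem_image, Finset.mem_coe, mem_allocFinset]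
  constructor
  · rintro ⟨X, hX, rfl⟩; exact ⟨X, hX, rfl⟩
  · rintro ⟨X, hX, rfl⟩; exact ⟨X, hX, rfl⟩

lemma le_maxAlloc (M : ℕ) (Menu : Finset (Bundle M)) (f : Bundle M → ℝ)
    {X : Finset (Bundle M)} (hX : Feasible M Menu X) :
    ∑ b ∈ X, f b ≤ maxAlloc M Menu f := by
  rw [maxAlloc_eq_sup']
  exact Finset.le_sup' (fun X => ∑ b ∈ X, f b) (mem_allocFinset.2 hX)

lemma maxAlloc_le (M : ℕ) (Menu : Finset (Bundle M)) (f : Bundle M → ℝ) {c : ℝ}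
    (h : ∀ X : Finset (Bundle M), Feasible M Menu X → ∑ b ∈ X, f b ≤ c) :
    maxAlloc M Menu f ≤ c := by
  rw [maxAlloc_eq_sup']
  exact Finset.sup'_le _ _ (fun X hX => h X (mem_allocFinset.1 hX))

lemma maxAlloc_nonneg (M : ℕ) (Menu : Finset (Bundle M)) (f : Bundle M → ℝ) :
    0 ≤ maxAlloc M Menu f := by
  have := le_maxAlloc M Menu f (feasible_empty M Menu)
  simpa using this

lemma abs_maxAlloc_le (M : ℕ) (Menu : Finset (Bundle M)) (f : Bundle M → ℝ) :
    |maxAlloc M Menu f| ≤ ∑ b ∈ Menu, |f b| := by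
  rw [abs_of_nonneg (maxAlloc_nonneg M Menu f)]
  refine maxAlloc_le M Menu f (fun X hX => ?_)
  calc ∑ b ∈ X, f b ≤ ∑ b ∈ X, |f b| := Finset.sum_le_sum (fun b _ => le_abs_self _)
    _ ≤ ∑ b ∈ Menu, |f b| :=
      Finset.sum_le_sum_of_subset_of_nonneg hX.1 (fun b _ _ => abs_nonneg _)

open Classical in
noncomputable def kSets (N k : ℕ) : Finset (Finset (Fin N)) :=
  Finset.univ.filter (fun T => T.card = k)

lemma mem_kSets {N k : ℕ} {T : Finset (Fin N)} : T ∈ kSets N k ↔ T.card = k := by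
  classical simp [kSets]

lemma kSets_nonempty {N k : ℕ} (hkN : k ≤ N) : (kSets N k).Nonempty := by
  obtain ⟨T, -, hT⟩ := Finset.exists_subset_card_eq (s := (Finset.univ : Finset (Fin N)))
    (n := k) (by simpa using hkN)
  exact ⟨T, mem_kSets.2 hT⟩

lemma kthHighest_eq_sup' {N k : ℕ} (hkN : k ≤ N) (w : Fin N → ℝ) :
    kthHighest N w k
      = (kSets N k).sup' (kSets_nonempty hkN) (fun T => sInf (w '' (T : Set (Fin N)))) := by
  rw [Finset.sup'_eq_csSup_image]
  unfold kthHighest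
  congr 1
  ext y
  simp only [Set.mem_setOf_eq, Set.mem_image, Finset.mem_coe, mem_kSets]
  constructor
  · rintro ⟨T, hT, rfl⟩; exact ⟨T, hT, rfl⟩
  · rintro ⟨T, hT, rfl⟩; exact ⟨T, hT, rfl⟩

lemma sInf_image_eq_inf' {N : ℕ} {T : Finset (Fin N)} (hT : T.Nonempty) (w : Fin N → ℝ) :
    sInf (w '' (T : Set (Fin N))) = T.inf' hT w := by
  rw [Finset.inf'_eq_csInf_image]

/-- The k-th highest is attained at some index. -/
lemma kthHighest_mem_range {N k : ℕ} (hk1 : 1 ≤ k) (hkN : k ≤ N) (w : Fin N → ℝ) :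
    ∃ n : Fin N, kthHighest N w k = w n := by
  rw [kthHighest_eq_sup' hkN]
  obtain ⟨T, hT, hTeq⟩ := Finset.exists_mem_eq_sup' (kSets_nonempty hkN)
    (fun T => sInf (w '' (T : Set (Fin N))))
  have hTne : T.Nonempty := Finset.card_pos.1 (by rw [mem_kSets.1 hT]; omega)
  obtain ⟨n, hn, hneq⟩ := Finset.exists_mem_eq_inf' hTne w
  exact ⟨n, by rw [hTeq, sInf_image_eq_inf' hTne, hneq]⟩

lemma kthHighest_nonneg {N k : ℕ} (hk1 : 1 ≤ k) (hkN : k ≤ N) {w : Fin N → ℝ}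
    (hw : ∀ n, 0 ≤ w n) : 0 ≤ kthHighest N w k := by
  obtain ⟨n, hn⟩ := kthHighest_mem_range hk1 hkN w
  rw [hn]; exact hw n

lemma abs_kthHighest_le {N k : ℕ} (hk1 : 1 ≤ k) (hkN : k ≤ N) (w : Fin N → ℝ) :
    |kthHighest N w k| ≤ ∑ n : Fin N, |w n| := by
  obtain ⟨n, hn⟩ := kthHighest_mem_range hk1 hkN w
  rw [hn]
  exact Finset.single_le_sum (f := fun n => |w n|) (fun i _ => abs_nonneg _) (Finset.mem_univ n)

/-- at most `k-1` indices strictly exceed the k-th highest. -/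
lemma card_gt_kthHighest_le {N k : ℕ} (hk1 : 1 ≤ k) (hkN : k ≤ N) (w : Fin N → ℝ) :
    (Finset.univ.filter (fun n => kthHighest N w k < w n)).card ≤ k - 1 := by
  classical
  by_contra hcon
  push_neg at hcon
  have hk' : k ≤ (Finset.univ.filter (fun n => kthHighest N w k < w n)).card := by omega
  obtain ⟨T, hTsub, hTcard⟩ := Finset.exists_subset_card_eq hk'
  have hTmem : T ∈ kSets N k := mem_kSets.2 hTcard
  have hTne : T.Nonempty := Finset.card_pos.1 (by rw [hTcard]; omega)
  have hle : sInf (w '' (T : Set (Fin N))) ≤ kthHighest N w k := by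
    rw [kthHighest_eq_sup' hkN]
    exact Finset.le_sup' (fun T : Finset (Fin N) => sInf (w '' (T : Set (Fin N)))) hTmem
  rw [sInf_image_eq_inf' hTne] at hle
  obtain ⟨n, hn, hneq⟩ := Finset.exists_mem_eq_inf' hTne w
  have : kthHighest N w k < w n := (Finset.mem_filter.1 (hTsub hn)).2
  rw [← hneq] at this
  exact absurd (hle.trans_lt this) (lt_irrefl _)


section Cont
variable {ι X : Type*} [TopologicalSpace X]

lemma continuous_finset_sup' {s : Finset ι} (hs : s.Nonempty) {g : ι → X → ℝ}
    (hg : ∀ i ∈ s, Continuous (g i)) :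
    Continuous fun x => s.sup' hs fun i => g i x := by
  induction hs using Finset.Nonempty.cons_induction with
  | singleton i =>
      have : (fun x => ({i} : Finset ι).sup' (Finset.singleton_nonempty i) fun j => g j x)
          = fun x => g i x := by
        funext x; simp
      rw [this]; exact hg i (Finset.mem_singleton_self i)
  | cons i s his hs ih =>
      have : (fun x => (Finset.cons i s his).sup' (Finset.cons_nonempty his) fun j => g j x)
          = fun x => max (g i x) (s.sup' hs fun j => g j x) := by
        funext x; rw [Finset.sup'_cons hs]
      rw [this]
      exact Continuous.max (hg i (Finset.mem_cons_self i s))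
        (ih (fun j hj => hg j (Finset.mem_cons_of_mem hj)))

lemma continuous_finset_inf' {s : Finset ι} (hs : s.Nonempty) {g : ι → X → ℝ}
    (hg : ∀ i ∈ s, Continuous (g i)) :
    Continuous fun x => s.inf' hs fun i => g i x := by
  induction hs using Finset.Nonempty.cons_induction with
  | singleton i =>
      have : (fun x => ({i} : Finset ι).inf' (Finset.singleton_nonempty i) fun j => g j x)
          = fun x => g i x := by
        funext x; simp
      rw [this]; exact hg i (Finset.mem_singleton_self i)
  | cons i s his hs ih =>
      have : (fun x => (Finset.cons i s his).inf' (Finset.cons_nonempty his) fun j => g j x)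
          = fun x => min (g i x) (s.inf' hs fun j => g j x) := by
        funext x; rw [Finset.inf'_cons hs]
      rw [this]
      exact Continuous.min (hg i (Finset.mem_cons_self i s))
        (ih (fun j hj => hg j (Finset.mem_cons_of_mem hj)))

end Cont

example (M N : ℕ) : BorelSpace (Fin N → Valuation M) := by infer_instance
example (M N : ℕ) (n : Fin N) (b : Bundle M) :
    Continuous (fun v : Fin N → Valuation M => v n b) :=
  (continuous_apply b).comp (continuous_apply n)


section Aux
variable {M N k : ℕ}

/-! ### surplusEx: finite representation and bounds -/

open Classical in
noncomputable def surpFinset (M N : ℕ) (Menu : Finset (Bundle M)) :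
    Finset (Finset (Bundle M) × (Bundle M → Fin N)) :=
  Finset.univ.filter (fun p => Feasible M Menu p.1 ∧ p.1.card ≤ N ∧ Set.InjOn p.2 ↑p.1)

lemma mem_surpFinset {Menu : Finset (Bundle M)} {p : Finset (Bundle M) × (Bundle M → Fin N)} :
    p ∈ surpFinset M N Menu ↔ Feasible M Menu p.1 ∧ p.1.card ≤ N ∧ Set.InjOn p.2 ↑p.1 := by
  classical simp [surpFinset]

lemma surpFinset_nonempty (hN : 0 < N) (Menu : Finset (Bundle M)) :
    (surpFinset M N Menu).Nonempty := by
  refine ⟨⟨∅, fun _ => ⟨0, hN⟩⟩, mem_surpFinset.2 ⟨feasible_empty M Menu, ?_, ?_⟩⟩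
  · simp
  · simp [Set.InjOn]

lemma surplusEx_eq_sup' (hN : 0 < N) (Menu : Finset (Bundle M)) (v : Fin N → Valuation M) :
    surplusEx M N Menu v
      = (surpFinset M N Menu).sup' (surpFinset_nonempty hN Menu)
          (fun p => ∑ b ∈ p.1, v (p.2 b) b) := by
  rw [Finset.sup'_eq_csSup_image]
  unfold surplusEx
  congr 1
  ext y
  simp only [Set.mem_setOf_eq, Set.mem_image, Finset.mem_coe, mem_surpFinset]
  constructor
  · rintro ⟨X, h1, h2, ι, h3, rfl⟩; exact ⟨⟨X, ι⟩, ⟨h1, h2, h3⟩, rfl⟩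
  · rintro ⟨⟨X, ι⟩, ⟨h1, h2, h3⟩, rfl⟩; exact ⟨X, h1, h2, ι, h3, rfl⟩

lemma surplusEx_le (hN : 0 < N) (Menu : Finset (Bundle M)) (v : Fin N → Valuation M) {c : ℝ}
    (h : ∀ X : Finset (Bundle M), Feasible M Menu X → X.card ≤ N →
      ∀ ι : Bundle M → Fin N, Set.InjOn ι ↑X → ∑ b ∈ X, v (ι b) b ≤ c) :
    surplusEx M N Menu v ≤ c := by
  rw [surplusEx_eq_sup' hN]
  refine Finset.sup'_le _ _ (fun p hp => ?_)
  obtain ⟨h1, h2, h3⟩ := mem_surpFinset.1 hp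
  exact h p.1 h1 h2 p.2 h3

set_option maxHeartbeats 1000000 in
lemma surplusEx_nonneg (hN : 0 < N) (Menu : Finset (Bundle M)) (v : Fin N → Valuation M) :
    0 ≤ surplusEx M N Menu v := by
  rw [surplusEx_eq_sup' hN]
  set p0 : Finset (Bundle M) × (Bundle M → Fin N) := ⟨∅, fun _ => ⟨0, hN⟩⟩ with hp0
  have hmem : p0 ∈ surpFinset M N Menu := by
    rw [mem_surpFinset, hp0]
    exact ⟨feasible_empty M Menu, by simp, by simp [Set.InjOn]⟩
  have h := Finset.le_sup' (fun p : Finset (Bundle M) × (Bundle M → Fin N)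
    => ∑ b ∈ p.1, v (p.2 b) b) hmem
  refine le_trans ?_ h
  simp [hp0]

lemma abs_surplusEx_le (hN : 0 < N) (Menu : Finset (Bundle M)) (v : Fin N → Valuation M) :
    |surplusEx M N Menu v| ≤ ∑ b ∈ Menu, ∑ n : Fin N, |v n b| := by
  rw [abs_of_nonneg (surplusEx_nonneg hN Menu v)]
  refine surplusEx_le hN Menu v (fun X h1 h2 ι h3 => ?_)
  calc ∑ b ∈ X, v (ι b) b ≤ ∑ b ∈ X, ∑ n : Fin N, |v n b| := by
        refine Finset.sum_le_sum (fun b _ => ?_)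
        exact le_trans (le_abs_self _)
          (Finset.single_le_sum (f := fun n => |v n b|) (fun i _ => abs_nonneg _)
            (Finset.mem_univ (ι b)))
    _ ≤ ∑ b ∈ Menu, ∑ n : Fin N, |v n b| :=
        Finset.sum_le_sum_of_subset_of_nonneg h1.1
          (fun b _ _ => Finset.sum_nonneg (fun n _ => abs_nonneg _))

/-- On constant (diagonal) profiles, the efficient surplus is at most `maxAlloc`. -/
lemma surplusEx_diag_le (hN : 0 < N) (Menu : Finset (Bundle M)) (w : Valuation M) :
    surplusEx M N Menu (fun _ => w) ≤ maxAlloc M Menu w :=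
  surplusEx_le hN Menu _ (fun X h1 _ _ _ => le_maxAlloc M Menu w h1)

/-! ### continuity and measurability -/

lemma continuous_maxAlloc_comp {X : Type*} [TopologicalSpace X] (M : ℕ)
    (Menu : Finset (Bundle M)) {F : Bundle M → X → ℝ} (hF : ∀ b, Continuous (F b)) :
    Continuous fun x => maxAlloc M Menu (fun b => F b x) := by
  have h : (fun x => maxAlloc M Menu (fun b => F b x))
      = fun x => (allocFinset M Menu).sup' (allocFinset_nonempty M Menu)
          (fun Xs => ∑ b ∈ Xs, F b x) := funext fun x => maxAlloc_eq_sup' M Menu _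
  rw [h]
  exact continuous_finset_sup' _ (fun Xs _ => continuous_finset_sum _ (fun b _ => hF b))

lemma continuous_kthHighest_comp {X : Type*} [TopologicalSpace X] (hkN : k ≤ N)
    {W : Fin N → X → ℝ} (hW : ∀ n, Continuous (W n)) :
    Continuous fun x => kthHighest N (fun n => W n x) k := by
  have h : (fun x => kthHighest N (fun n => W n x) k)
      = fun x => (kSets N k).sup' (kSets_nonempty hkN)
          (fun T => sInf ((fun n => W n x) '' (T : Set (Fin N)))) :=
    funext fun x => kthHighest_eq_sup' hkN _
  rw [h]
  refine continuous_finset_sup' _ (fun T hT => ?_)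
  rcases Nat.eq_zero_or_pos k with hk0 | hk0
  · -- k = 0 : T = ∅, sInf of empty image is constant
    have hTe : T = ∅ := Finset.card_eq_zero.1 (by rw [mem_kSets.1 hT, hk0])
    subst hTe
    simpa using continuous_const
  · have hTne : T.Nonempty := Finset.card_pos.1 (by rw [mem_kSets.1 hT]; omega)
    have h2 : (fun x => sInf ((fun n => W n x) '' (T : Set (Fin N))))
        = fun x => T.inf' hTne (fun n => W n x) :=
      funext fun x => sInf_image_eq_inf' hTne _
    rw [h2]
    exact continuous_finset_inf' _ (fun n _ => hW n)

lemma continuous_rankGuarantee (M N : ℕ) (Menu : Finset (Bundle M)) (k : ℕ) (hkN : k ≤ N) :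
    Continuous fun v : Fin N → Valuation M => rankGuarantee M N Menu v k :=
  continuous_maxAlloc_comp M Menu (fun b => continuous_kthHighest_comp hkN
    (fun n => (continuous_apply b).comp (continuous_apply n)))

lemma continuous_surplusEx (M N : ℕ) (hN : 0 < N) (Menu : Finset (Bundle M)) :
    Continuous fun v : Fin N → Valuation M => surplusEx M N Menu v := by
  have h : (fun v : Fin N → Valuation M => surplusEx M N Menu v)
      = fun v => (surpFinset M N Menu).sup' (surpFinset_nonempty hN Menu)
          (fun p => ∑ b ∈ p.1, v (p.2 b) b) := funext fun v => surplusEx_eq_sup' hN Menu v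
  rw [h]
  refine continuous_finset_sup' _ (fun p _ => ?_)
  exact continuous_finset_sum _
    (fun b _ => (continuous_apply b).comp (continuous_apply (p.2 b)))

lemma continuous_maxAlloc_val (M : ℕ) (Menu : Finset (Bundle M)) :
    Continuous fun w : Valuation M => maxAlloc M Menu w :=
  continuous_maxAlloc_comp M Menu (fun b => continuous_apply b)

end Aux
section Meas
variable {M N k : ℕ}

lemma measurable_evalV (b : Bundle M) : Measurable (fun w : Valuation M => w b) :=
  measurable_pi_apply b

lemma measurable_evalP (n : Fin N) (b : Bundle M) :
    Measurable (fun v : Fin N → Valuation M => v n b) :=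
  (measurable_pi_apply b).comp (measurable_pi_apply n)

lemma quantileQ_nonneg (G : Measure (Valuation M)) (b : Bundle M) :
    0 ≤ quantileQ M N k G b :=
  Real.sInf_nonneg (fun q hq => hq.1)

lemma quantile_tail_mass (hk1 : 1 ≤ k) (hkN : k ≤ N)
    (G : Measure (Valuation M)) [IsProbabilityMeasure G]
    (hsupp : G {w | IsValuationNN M w} = 1) (b : Bundle M) :
    ((k - 1 : ℕ) : ℝ≥0∞) / (N : ℝ≥0∞) ≤ G {w | quantileQ M N k G b ≤ w b} := by
  set c := quantileQ M N k G b with hc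
  have hc0 : 0 ≤ c := quantileQ_nonneg G b
  have hlevel_le_one : ((k - 1 : ℕ) : ℝ≥0∞) / (N : ℝ≥0∞) ≤ 1 := by
    rcases Nat.eq_zero_or_pos N with h | h
    · omega
    · rw [ENNReal.div_le_iff (by exact_mod_cast h.ne') (by simp), one_mul]
      exact_mod_cast Nat.sub_le_of_le_add (by omega)
  rcases eq_or_lt_of_le hc0 with hc0' | hcpos
  · -- c = 0 : the tail has full measure
    have hsub : {w : Valuation M | IsValuationNN M w} ⊆ {w | c ≤ w b} := by
      intro w hw
      rw [← hc0']
      exact hw.2 b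
    calc ((k - 1 : ℕ) : ℝ≥0∞) / (N : ℝ≥0∞) ≤ 1 := hlevel_le_one
      _ = G {w | IsValuationNN M w} := hsupp.symm
      _ ≤ G {w | c ≤ w b} := measure_mono hsub
  · -- c > 0 : approximate the closed tail by open tails
    set q : ℕ → ℝ := fun i => c - c / (i + 1) with hq
    have hqlt : ∀ i, q i < c := by
      intro i
      have : 0 < c / (i + 1 : ℝ) := by positivity
      simp only [hq]; linarith
    have hq0 : ∀ i, 0 ≤ q i := by
      intro i
      have h1 : c / ((i : ℝ) + 1) ≤ c := by
        rw [div_le_iff₀ (by positivity)]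
        nlinarith [Nat.cast_nonneg (α := ℝ) i]
      simp only [hq]
      linarith
    have hnotmem : ∀ i, ¬ (G {w | q i < w b} ≤ ((k - 1 : ℕ) : ℝ≥0∞) / (N : ℝ≥0∞)) := by
      intro i hmem
      have : c ≤ q i := csInf_le ⟨0, fun x hx => hx.1⟩ ⟨hq0 i, hmem⟩
      exact absurd this (not_le.2 (hqlt i))
    have hiInter : (⋂ i, {w : Valuation M | q i < w b}) = {w | c ≤ w b} := by
      ext w
      simp only [Set.mem_iInter, Set.mem_setOf_eq]
      constructor
      · intro h
        by_contra hlt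
        push_neg at hlt
        obtain ⟨i, hi⟩ := exists_nat_one_div_lt (ε := (c - w b) / c) (div_pos (by linarith) hcpos)
        have hip : (0:ℝ) < (i : ℝ) + 1 := by positivity
        have key : 1 * c < (c - w b) * ((i:ℝ) + 1) := (div_lt_div_iff₀ hip hcpos).1 hi
        have h2 : c / ((i:ℝ) + 1) < c - w b := by
          rw [div_lt_iff₀ hip]
          linarith
        have := h i
        simp only [hq] at this
        linarith
      · intro h i
        exact lt_of_lt_of_le (hqlt i) h
    have hmeas : ∀ i, MeasurableSet {w : Valuation M | q i < w b} := by
      intro i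
      exact measurableSet_lt measurable_const (measurable_evalV b)
    have hdir : Directed (fun x1 x2 : Set (Valuation M) => x1 ⊇ x2)
        (fun i => {w : Valuation M | q i < w b}) := by
      have hmono : Monotone q := by
        intro i j hij
        simp only [hq]
        have hij' : ((i:ℝ) + 1) ≤ (j:ℝ) + 1 := by
          have := (Nat.cast_le (α := ℝ)).2 hij
          linarith
        have : c / ((j:ℝ) + 1) ≤ c / ((i:ℝ) + 1) :=
          div_le_div_of_nonneg_left hc0 (by positivity) hij'
        linarith
      intro i j
      refine ⟨max i j, ?_, ?_⟩
      · intro w hw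
        exact lt_of_le_of_lt (hmono (le_max_left i j)) hw
      · intro w hw
        exact lt_of_le_of_lt (hmono (le_max_right i j)) hw
    have := Directed.measure_iInter (μ := G) (fun i => (hmeas i).nullMeasurableSet) hdir
      ⟨0, measure_ne_top G _⟩
    rw [hiInter] at this
    rw [this]
    refine le_iInf (fun i => ?_)
    exact (not_le.1 (hnotmem i)).le
end Meas
section Avg
variable {M N k : ℕ}

lemma quantile_tail_mass_real (hk1 : 1 ≤ k) (hkN : k ≤ N) (hN : 0 < N)
    (G : Measure (Valuation M)) [IsProbabilityMeasure G]
    (hsupp : G {w | IsValuationNN M w} = 1) (b : Bundle M) :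
    ((k : ℝ) - 1) ≤ (N : ℝ) * (G {w | quantileQ M N k G b ≤ w b}).toReal := by
  have h := quantile_tail_mass hk1 hkN G hsupp b
  have hfin : G {w | quantileQ M N k G b ≤ w b} ≤ 1 := prob_le_one
  have h2 : (((k - 1 : ℕ) : ℝ≥0∞) / (N : ℝ≥0∞)).toReal
      ≤ (G {w | quantileQ M N k G b ≤ w b}).toReal :=
    ENNReal.toReal_mono (ne_top_of_le_ne_top (by simp) hfin) h
  rw [ENNReal.toReal_div] at h2
  simp only [ENNReal.toReal_natCast] at h2
  have hN' : (0:ℝ) < (N:ℝ) := by exact_mod_cast hN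
  have h3 : ((k:ℝ) - 1) = (N:ℝ) * (((k-1 : ℕ):ℝ) / (N:ℝ)) := by
    rw [Nat.cast_sub hk1]
    push_cast
    field_simp
  rw [h3]
  exact mul_le_mul_of_nonneg_left h2 (le_of_lt hN')

variable (F : Measure (Fin N → Valuation M)) [IsProbabilityMeasure F]

lemma map_le_avgMarginal (hN : 0 < N) (n : Fin N) :
    F.map (fun v => v n) ≤ (N : ℝ≥0∞) • avgMarginal M N F := by
  have hNne : (N : ℝ≥0∞) ≠ 0 := by exact_mod_cast hN.ne'
  have hNnt : (N : ℝ≥0∞) ≠ ⊤ := by simp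
  have h1 : (N : ℝ≥0∞) • avgMarginal M N F = ∑ m : Fin N, F.map (fun v => v m) := by
    rw [avgMarginal, smul_smul, ENNReal.mul_inv_cancel hNne hNnt, one_smul]
  rw [h1, ← Measure.sum_fintype]
  exact Measure.le_sum _ n

lemma integrable_comp_marginal (hN : 0 < N) {φ : Valuation M → ℝ} (hφ : Measurable φ)
    (hint : Integrable φ (avgMarginal M N F)) (n : Fin N) :
    Integrable (fun v => φ (v n)) F := by
  have h1 : Integrable φ ((N : ℝ≥0∞) • avgMarginal M N F) :=
    hint.smul_measure (by simp)
  have h2 : Integrable φ (F.map (fun v => v n)) :=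
    h1.mono_measure (map_le_avgMarginal F hN n)
  have := (integrable_map_measure hφ.aestronglyMeasurable
    (measurable_pi_apply n).aemeasurable).1 h2
  exact this

lemma sum_integral_comp (hN : 0 < N) {φ : Valuation M → ℝ} (hφ : Measurable φ)
    (hint : Integrable φ (avgMarginal M N F)) :
    ∑ n : Fin N, ∫ v, φ (v n) ∂F = (N : ℝ) * ∫ w, φ w ∂(avgMarginal M N F) := by
  have hmapint : ∀ n : Fin N, Integrable φ (F.map (fun v => v n)) := by
    intro n
    exact (hint.smul_measure (c := (N : ℝ≥0∞)) (by simp)).mono_measure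
      (map_le_avgMarginal F hN n)
  have h1 : ∫ w, φ w ∂(avgMarginal M N F)
      = ((N : ℝ≥0∞)⁻¹).toReal • ∫ w, φ w ∂(∑ n : Fin N, F.map (fun v => v n)) := by
    rw [avgMarginal, integral_smul_measure]
  have h2 : ∫ w, φ w ∂(∑ n : Fin N, F.map (fun v => v n))
      = ∑ n : Fin N, ∫ w, φ w ∂(F.map (fun v => v n)) :=
    integral_finset_sum_measure (fun n _ => hmapint n)
  have h3 : ∀ n : Fin N, ∫ w, φ w ∂(F.map (fun v => v n)) = ∫ v, φ (v n) ∂F := by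
    intro n
    exact integral_map (measurable_pi_apply n).aemeasurable
      (hφ.aestronglyMeasurable)
  have hN' : (0:ℝ) < (N:ℝ) := by exact_mod_cast hN
  rw [h1, h2]
  simp only [h3]
  rw [ENNReal.toReal_inv, ENNReal.toReal_natCast, smul_eq_mul, ← mul_assoc,
    mul_inv_cancel₀ hN'.ne', one_mul]

lemma ae_nonneg_profile
    (hsupp : F {v | ∀ n, IsValuationNN M (v n)} = 1) :
    ∀ᵐ v ∂F, ∀ (n : Fin N) (b : Bundle M), 0 ≤ v n b := by
  have hSmeas : MeasurableSet {v : Fin N → Valuation M | ∀ n, IsValuationNN M (v n)} := by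
    have : {v : Fin N → Valuation M | ∀ n, IsValuationNN M (v n)}
        = ⋂ n, (((fun v : Fin N → Valuation M => v n ∅) ⁻¹' {0}) ∩
            ⋂ b, ((fun v : Fin N → Valuation M => v n b) ⁻¹' Set.Ici 0)) := by
      ext v
      simp [IsValuationNN, Set.mem_iInter, forall_and]
    rw [this]
    refine MeasurableSet.iInter (fun n => ?_)
    exact ((measurable_evalP n ∅) (measurableSet_singleton 0)).inter
      (MeasurableSet.iInter (fun b => (measurable_evalP n b) measurableSet_Ici))
  have hcompl : F {v : Fin N → Valuation M | ∀ n, IsValuationNN M (v n)}ᶜ = 0 := by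
    rw [measure_compl hSmeas (measure_ne_top F _), hsupp, measure_univ, tsub_self]
  refine ae_iff.2 (measure_mono_null ?_ hcompl)
  intro v hv
  simp only [Set.mem_setOf_eq] at hv
  push_neg at hv
  obtain ⟨n, b, hb⟩ := hv
  simp only [Set.mem_compl_iff, Set.mem_setOf_eq]
  intro hall
  exact absurd ((hall n).2 b) (not_le.2 hb)

end Avg
section Key
variable {M N k : ℕ}

lemma scalar_key {a h c : ℝ} (hh : 0 ≤ h) :
    a ≤ h + ((if h < a then c else 0) + (if c ≤ a then a - c else 0)) := by
  by_cases h1 : h < a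
  · by_cases h2 : c ≤ a
    · simp only [if_pos h1, if_pos h2]; linarith
    · push_neg at h2
      simp only [if_pos h1, if_neg (not_le.2 h2)]
      linarith
  · push_neg at h1
    by_cases h2 : c ≤ a
    · simp only [if_neg (not_lt.2 h1), if_pos h2]; linarith
    · simp only [if_neg (not_lt.2 h1), if_neg h2]; linarith

lemma sum_ite_gt_le (hk1 : 1 ≤ k) (hkN : k ≤ N) (w : Fin N → ℝ) {c : ℝ} (hc : 0 ≤ c) :
    ∑ n : Fin N, (if kthHighest N w k < w n then c else 0) ≤ ((k : ℝ) - 1) * c := by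
  classical
  rw [Finset.sum_ite, Finset.sum_const, Finset.sum_const_zero, add_zero]
  have hcard := card_gt_kthHighest_le hk1 hkN w
  have h1 : ((Finset.univ.filter (fun n => kthHighest N w k < w n)).card : ℝ) * c
      ≤ ((k - 1 : ℕ) : ℝ) * c := by
    apply mul_le_mul_of_nonneg_right _ hc
    exact_mod_cast hcard
  rw [nsmul_eq_mul]
  refine le_trans h1 ?_
  rw [Nat.cast_sub hk1]
  simp

/-- The central pointwise inequality. -/
lemma pointwise_key (hk1 : 1 ≤ k) (hkN : k ≤ N) (Menu : Finset (Bundle M))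
    (c : Bundle M → ℝ) (hc : ∀ b, 0 ≤ c b) (v : Fin N → Valuation M)
    (hv : ∀ n b, 0 ≤ v n b) :
    ∑ n : Fin N, maxAlloc M Menu (v n)
      ≤ (N : ℝ) * rankGuarantee M N Menu v k
        + ∑ b ∈ Menu, (((k : ℝ) - 1) * c b
          + ∑ n : Fin N, (({w : Valuation M | c b ≤ w b}).indicator (fun w => w b) (v n)
              - ({w : Valuation M | c b ≤ w b}).indicator (fun _ => c b) (v n))) := by
  classical
  set kth : Bundle M → ℝ := fun b => kthHighest N (fun n => v n b) k with hkth_def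
  have hkth : ∀ b, 0 ≤ kth b := fun b => kthHighest_nonneg hk1 hkN (fun n => hv n b)
  set corr : Fin N → Bundle M → ℝ := fun n b =>
    (if kth b < v n b then c b else 0) + (if c b ≤ v n b then v n b - c b else 0)
    with hcorr_def
  have hcorr_nonneg : ∀ n b, 0 ≤ corr n b := by
    intro n b
    apply add_nonneg
    · split
      · exact hc b
      · exact le_refl 0
    · split
      · rename_i hle; linarith
      · exact le_refl 0
  have hstep : ∀ n : Fin N, maxAlloc M Menu (v n)
      ≤ rankGuarantee M N Menu v k + ∑ b ∈ Menu, corr n b := by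
    intro n
    refine maxAlloc_le M Menu (v n) (fun X hX => ?_)
    have h1 : ∑ b ∈ X, v n b ≤ ∑ b ∈ X, (kth b + corr n b) := by
      refine Finset.sum_le_sum (fun b _ => ?_)
      exact scalar_key (hkth b)
    rw [Finset.sum_add_distrib] at h1
    refine le_trans h1 (add_le_add ?_ ?_)
    · exact le_maxAlloc M Menu kth hX
    · exact Finset.sum_le_sum_of_subset_of_nonneg hX.1
        (fun b _ _ => hcorr_nonneg n b)
  have hsum : ∑ n : Fin N, maxAlloc M Menu (v n)
      ≤ ∑ n : Fin N, (rankGuarantee M N Menu v k + ∑ b ∈ Menu, corr n b) :=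
    Finset.sum_le_sum (fun n _ => hstep n)
  rw [Finset.sum_add_distrib, Finset.sum_const, Finset.card_univ, Fintype.card_fin,
    nsmul_eq_mul] at hsum
  refine le_trans hsum (add_le_add_right ?_ _)
  rw [Finset.sum_comm]
  refine Finset.sum_le_sum (fun b _ => ?_)
  have hsplit : ∑ n : Fin N, corr n b
      = (∑ n : Fin N, (if kth b < v n b then c b else 0))
        + ∑ n : Fin N, (if c b ≤ v n b then v n b - c b else 0) := by
    rw [← Finset.sum_add_distrib]
  rw [hsplit]
  refine add_le_add (sum_ite_gt_le hk1 hkN (fun n => v n b) (hc b)) (le_of_eq ?_)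
  refine Finset.sum_congr rfl (fun n _ => ?_)
  rw [Set.indicator_apply, Set.indicator_apply]
  simp only [Set.mem_setOf_eq]
  split
  · ring
  · ring
end Key
section Main
variable {M N k : ℕ}

lemma main_integral_ineq (hk2 : 2 ≤ k) (hkN : k ≤ N) (hN : 0 < N)
    (Menu : Finset (Bundle M))
    (F : Measure (Fin N → Valuation M)) [IsProbabilityMeasure F]
    (hFsupp : F {v | ∀ n, IsValuationNN M (v n)} = 1)
    (hGprob : IsProbabilityMeasure (avgMarginal M N F))
    (hGsupp : (avgMarginal M N F) {w | IsValuationNN M w} = 1)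
    (hGint : ∀ b : Bundle M, Integrable (fun w : Valuation M => w b) (avgMarginal M N F)) :
    ∫ w, maxAlloc M Menu w ∂(avgMarginal M N F)
      ≤ (∫ v, rankGuarantee M N Menu v k ∂F)
        + ∑ b ∈ Menu, ∫ w in {w : Valuation M | quantileQ M N k (avgMarginal M N F) b ≤ w b},
            w b ∂(avgMarginal M N F) := by
  haveI := hGprob
  set G := avgMarginal M N F with hG
  set c : Bundle M → ℝ := fun b => quantileQ M N k G b with hc_def
  have hk1 : 1 ≤ k := by omega
  have hc : ∀ b, 0 ≤ c b := fun b => quantileQ_nonneg G b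
  have hN' : (0:ℝ) < (N:ℝ) := by exact_mod_cast hN
  have hsetm : ∀ b : Bundle M, MeasurableSet {w : Valuation M | c b ≤ w b} :=
    fun b => measurableSet_le measurable_const (measurable_evalV b)
  set φt : Bundle M → Valuation M → ℝ :=
    fun b => ({w : Valuation M | c b ≤ w b}).indicator (fun w => w b) with hφt
  set φc : Bundle M → Valuation M → ℝ :=
    fun b => ({w : Valuation M | c b ≤ w b}).indicator (fun _ => c b) with hφc
  have hφtm : ∀ b, Measurable (φt b) := fun b => (measurable_evalV b).indicator (hsetm b)
  have hφcm : ∀ b, Measurable (φc b) := fun b =>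
    (measurable_const (a := c b)).indicator (hsetm b)
  have hφtint : ∀ b, Integrable (φt b) G := fun b => (hGint b).indicator (hsetm b)
  have hφcint : ∀ b, Integrable (φc b) G := fun b =>
    (integrable_const (c b)).indicator (hsetm b)
  have hevF : ∀ (n : Fin N) (b : Bundle M),
      Integrable (fun v : Fin N → Valuation M => v n b) F :=
    fun n b => integrable_comp_marginal F hN (measurable_evalV b) (hGint b) n
  have hdom : Integrable (fun v : Fin N → Valuation M => ∑ b ∈ Menu, ∑ n : Fin N, |v n b|) F := by
    refine integrable_finset_sum _ (fun b _ => integrable_finset_sum _ (fun n _ => ?_))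
    exact (hevF n b).abs
  have hdom_nonneg : ∀ v : Fin N → Valuation M,
      0 ≤ ∑ b ∈ Menu, ∑ n : Fin N, |v n b| :=
    fun v => Finset.sum_nonneg (fun b _ => Finset.sum_nonneg (fun n _ => abs_nonneg _))
  -- rankGuarantee : measurable and integrable
  have hrkm : Measurable (fun v : Fin N → Valuation M => rankGuarantee M N Menu v k) :=
    (continuous_rankGuarantee M N Menu k hkN).measurable
  have hrkint : Integrable (fun v => rankGuarantee M N Menu v k) F := by
    refine hdom.mono hrkm.aestronglyMeasurable (Filter.Eventually.of_forall (fun v => ?_))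
    rw [Real.norm_eq_abs, Real.norm_eq_abs, abs_of_nonneg (hdom_nonneg v)]
    refine le_trans (abs_maxAlloc_le M Menu _) (Finset.sum_le_sum (fun b _ => ?_))
    exact abs_kthHighest_le hk1 hkN _
  -- maxAlloc of coordinates : measurable and integrable
  have hmaxm : ∀ n : Fin N, Measurable (fun v : Fin N → Valuation M => maxAlloc M Menu (v n)) :=
    fun n => ((continuous_maxAlloc_val M Menu).comp (continuous_apply n)).measurable
  have hmaxint : ∀ n : Fin N, Integrable (fun v : Fin N → Valuation M => maxAlloc M Menu (v n)) F := by
    intro n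
    refine hdom.mono (hmaxm n).aestronglyMeasurable (Filter.Eventually.of_forall (fun v => ?_))
    rw [Real.norm_eq_abs, Real.norm_eq_abs, abs_of_nonneg (hdom_nonneg v)]
    refine le_trans (abs_maxAlloc_le M Menu _) (Finset.sum_le_sum (fun b _ => ?_))
    exact Finset.single_le_sum (f := fun n => |v n b|) (fun i _ => abs_nonneg _)
      (Finset.mem_univ n)
  -- maxAlloc on valuation space : integrable w.r.t. G
  have hmaxGint : Integrable (fun w : Valuation M => maxAlloc M Menu w) G := by
    have hdomG : Integrable (fun w : Valuation M => ∑ b ∈ Menu, |w b|) G :=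
      integrable_finset_sum _ (fun b _ => (hGint b).abs)
    refine hdomG.mono (continuous_maxAlloc_val M Menu).measurable.aestronglyMeasurable
      (Filter.Eventually.of_forall (fun w => ?_))
    rw [Real.norm_eq_abs, Real.norm_eq_abs]
    exact le_trans (abs_maxAlloc_le M Menu w) (le_abs_self _)
  -- composed indicator functions : integrable w.r.t. F
  have hφtcomp : ∀ (b : Bundle M) (n : Fin N), Integrable (fun v => φt b (v n)) F :=
    fun b n => integrable_comp_marginal F hN (hφtm b) (hφtint b) n
  have hφccomp : ∀ (b : Bundle M) (n : Fin N), Integrable (fun v => φc b (v n)) F :=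
    fun b n => integrable_comp_marginal F hN (hφcm b) (hφcint b) n
  -- the a.e. pointwise inequality
  have h_ae : ∀ᵐ v ∂F, ∑ n : Fin N, maxAlloc M Menu (v n)
      ≤ (N : ℝ) * rankGuarantee M N Menu v k
        + ∑ b ∈ Menu, (((k : ℝ) - 1) * c b
          + ∑ n : Fin N, (φt b (v n) - φc b (v n))) :=
    (ae_nonneg_profile F hFsupp).mono (fun v hv => pointwise_key hk1 hkN Menu c hc v hv)
  -- integrability of both sides
  have hLint : Integrable (fun v : Fin N → Valuation M =>
      ∑ n : Fin N, maxAlloc M Menu (v n)) F :=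
    integrable_finset_sum _ (fun n _ => hmaxint n)
  have hsubint : ∀ b : Bundle M, Integrable (fun v : Fin N → Valuation M =>
      ∑ n : Fin N, (φt b (v n) - φc b (v n))) F := by
    intro b
    have : ∀ n : Fin N, Integrable (fun v : Fin N → Valuation M => φt b (v n) - φc b (v n)) F :=
      fun n => (hφtcomp b n).sub (hφccomp b n)
    exact integrable_finset_sum _ (fun n _ => this n)
  have hbint : ∀ b ∈ Menu, Integrable (fun v : Fin N → Valuation M =>
      ((k : ℝ) - 1) * c b + ∑ n : Fin N, (φt b (v n) - φc b (v n))) F := by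
    intro b _
    exact (integrable_const _).add (hsubint b)
  have hRint : Integrable (fun v : Fin N → Valuation M =>
      (N : ℝ) * rankGuarantee M N Menu v k
        + ∑ b ∈ Menu, (((k : ℝ) - 1) * c b
          + ∑ n : Fin N, (φt b (v n) - φc b (v n)))) F :=
    (hrkint.const_mul _).add (integrable_finset_sum _ hbint)
  have hmono := integral_mono_ae hLint hRint h_ae
  -- expand the left side
  have hL : ∫ v, (∑ n : Fin N, maxAlloc M Menu (v n)) ∂F
      = (N : ℝ) * ∫ w, maxAlloc M Menu w ∂G := by
    rw [integral_finset_sum _ (fun n _ => hmaxint n)]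
    exact sum_integral_comp F hN (continuous_maxAlloc_val M Menu).measurable hmaxGint
  -- expand the right side
  have hR : ∫ v, ((N : ℝ) * rankGuarantee M N Menu v k
      + ∑ b ∈ Menu, (((k : ℝ) - 1) * c b
        + ∑ n : Fin N, (φt b (v n) - φc b (v n)))) ∂F
      = (N : ℝ) * (∫ v, rankGuarantee M N Menu v k ∂F)
        + ∑ b ∈ Menu, (((k : ℝ) - 1) * c b
          + ((N : ℝ) * ∫ w, φt b w ∂G - (N : ℝ) * ∫ w, φc b w ∂G)) := by
    rw [integral_add (hrkint.const_mul _) (integrable_finset_sum _ hbint),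
      integral_const_mul, integral_finset_sum _ hbint]
    congr 1
    refine Finset.sum_congr rfl (fun b hb => ?_)
    rw [integral_add (integrable_const _) (hsubint b), integral_const]
    simp only [measureReal_def, measure_univ, ENNReal.toReal_one, one_smul]
    congr 1
    rw [integral_finset_sum (f := fun (n : Fin N) (v : Fin N → Valuation M)
        => φt b (v n) - φc b (v n)) _
      (fun n _ => (hφtcomp b n).sub (hφccomp b n))]
    have : ∀ n : Fin N, ∫ v, (φt b (v n) - φc b (v n)) ∂F
        = (∫ v, φt b (v n) ∂F) - ∫ v, φc b (v n) ∂F :=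
      fun n => integral_sub (hφtcomp b n) (hφccomp b n)
    simp only [this]
    rw [Finset.sum_sub_distrib,
      sum_integral_comp F hN (hφtm b) (hφtint b),
      sum_integral_comp F hN (hφcm b) (hφcint b)]
  rw [hL, hR] at hmono
  -- bound the per-bundle correction terms
  have hper : ∀ b ∈ Menu, ((k : ℝ) - 1) * c b
      + ((N : ℝ) * ∫ w, φt b w ∂G - (N : ℝ) * ∫ w, φc b w ∂G)
      ≤ (N : ℝ) * ∫ w in {w : Valuation M | quantileQ M N k G b ≤ w b}, w b ∂G := by
    intro b _
    have h1 : ∫ w, φt b w ∂G = ∫ w in {w : Valuation M | quantileQ M N k G b ≤ w b}, w b ∂G := by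
      rw [hφt, integral_indicator (hsetm b)]
    have h2 : ∫ w, φc b w ∂G = (G {w : Valuation M | c b ≤ w b}).toReal * c b := by
      rw [hφc, integral_indicator_const (c b) (hsetm b), smul_eq_mul, measureReal_def]
    have h3 : ((k : ℝ) - 1) * c b ≤ (N : ℝ) * (G {w : Valuation M | c b ≤ w b}).toReal * c b := by
      refine mul_le_mul_of_nonneg_right ?_ (hc b)
      exact quantile_tail_mass_real hk1 hkN hN G hGsupp b
    rw [h1, h2]
    nlinarith [h3]
  have hsum_le : ∑ b ∈ Menu, (((k : ℝ) - 1) * c b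
      + ((N : ℝ) * ∫ w, φt b w ∂G - (N : ℝ) * ∫ w, φc b w ∂G))
      ≤ (N : ℝ) * ∑ b ∈ Menu,
          ∫ w in {w : Valuation M | quantileQ M N k G b ≤ w b}, w b ∂G := by
    rw [Finset.mul_sum]
    exact Finset.sum_le_sum hper
  have hfinal : (N : ℝ) * ∫ w, maxAlloc M Menu w ∂G
      ≤ (N : ℝ) * ((∫ v, rankGuarantee M N Menu v k ∂F)
        + ∑ b ∈ Menu, ∫ w in {w : Valuation M | quantileQ M N k G b ≤ w b}, w b ∂G) := by
    rw [mul_add]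
    exact le_trans hmono (add_le_add_right hsum_le _)
  exact (mul_le_mul_iff_right₀ hN').1 hfinal

end Main
section Final
variable {M N k : ℕ}

lemma measurableSet_NNval :
    MeasurableSet {w : Valuation M | IsValuationNN M w} := by
  have : {w : Valuation M | IsValuationNN M w}
      = (((fun w : Valuation M => w ∅) ⁻¹' {0}) ∩
          ⋂ b, ((fun w : Valuation M => w b) ⁻¹' Set.Ici 0)) := by
    ext w
    simp [IsValuationNN, Set.mem_iInter, forall_and]
  rw [this]
  exact ((measurable_evalV ∅) (measurableSet_singleton 0)).inter
    (MeasurableSet.iInter (fun b => (measurable_evalV b) measurableSet_Ici))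

lemma measurableSet_NNprofile :
    MeasurableSet {v : Fin N → Valuation M | ∀ n, IsValuationNN M (v n)} := by
  have : {v : Fin N → Valuation M | ∀ n, IsValuationNN M (v n)}
      = ⋂ n, ((fun v : Fin N → Valuation M => v n) ⁻¹'
          {w : Valuation M | IsValuationNN M w}) := by
    ext v
    simp [Set.mem_iInter]
  rw [this]
  exact MeasurableSet.iInter (fun n => (measurable_pi_apply n) measurableSet_NNval)

lemma measurable_diag :
    Measurable (fun w : Valuation M => (fun _ : Fin N => w)) :=
  measurable_pi_lambda _ (fun _ => measurable_id)

lemma avgMarginal_map_diag (hN : 0 < N) (G : Measure (Valuation M))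
    [IsProbabilityMeasure G] :
    avgMarginal M N (G.map (fun w => (fun _ : Fin N => w))) = G := by
  have hmap : ∀ n : Fin N,
      (G.map (fun w => (fun _ : Fin N => w))).map (fun v => v n) = G := by
    intro n
    rw [Measure.map_map (measurable_pi_apply n) measurable_diag]
    have : ((fun v : Fin N → Valuation M => v n) ∘ fun w _ => w)
        = id := rfl
    rw [this, Measure.map_id]
  rw [avgMarginal]
  simp only [hmap]
  rw [Finset.sum_const, Finset.card_univ, Fintype.card_fin,
    ← Nat.cast_smul_eq_nsmul ℝ≥0∞, smul_smul,
    ENNReal.inv_mul_cancel (by exact_mod_cast hN.ne' : (N:ℝ≥0∞) ≠ 0) (by simp), one_smul]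

lemma map_diag_prob (G : Measure (Valuation M)) [IsProbabilityMeasure G] :
    IsProbabilityMeasure (G.map (fun w => (fun _ : Fin N => w))) :=
  Measure.isProbabilityMeasure_map measurable_diag.aemeasurable

lemma map_diag_supp (hN : 0 < N) (G : Measure (Valuation M))
    (hGsupp : G {w | IsValuationNN M w} = 1) :
    (G.map (fun w => (fun _ : Fin N => w)))
      {v : Fin N → Valuation M | ∀ n, IsValuationNN M (v n)} = 1 := by
  rw [Measure.map_apply measurable_diag measurableSet_NNprofile]
  have : ((fun w : Valuation M => (fun _ : Fin N => w)) ⁻¹'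
      {v : Fin N → Valuation M | ∀ n, IsValuationNN M (v n)})
      = {w : Valuation M | IsValuationNN M w} := by
    ext w
    simp only [Set.mem_preimage, Set.mem_setOf_eq]
    constructor
    · intro h
      exact h ⟨0, hN⟩
    · intro h _
      exact h
  rw [this, hGsupp]

/-- The ex-ante surplus of the diagonal coupling is at most the expected `maxAlloc`. -/
lemma Vsurplus_map_diag_le (hN : 0 < N) (Menu : Finset (Bundle M))
    (G : Measure (Valuation M)) [IsProbabilityMeasure G]
    (hGint : ∀ b : Bundle M, Integrable (fun w : Valuation M => w b) G) :
    Vsurplus M N Menu (G.map (fun w => (fun _ : Fin N => w)))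
      ≤ ∫ w, maxAlloc M Menu w ∂G := by
  have hsem : Measurable (fun v : Fin N → Valuation M => surplusEx M N Menu v) :=
    (continuous_surplusEx M N hN Menu).measurable
  rw [Vsurplus, integral_map measurable_diag.aemeasurable hsem.aestronglyMeasurable]
  have hdomG : Integrable (fun w : Valuation M => ∑ b ∈ Menu, (N:ℝ) * |w b|) G :=
    integrable_finset_sum _ (fun b _ => ((hGint b).abs.const_mul _))
  have hseint : Integrable (fun w : Valuation M =>
      surplusEx M N Menu (fun _ => w)) G := by
    refine hdomG.mono (hsem.comp measurable_diag).aestronglyMeasurable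
      (Filter.Eventually.of_forall (fun w => ?_))
    rw [Real.norm_eq_abs, Real.norm_eq_abs]
    refine le_trans (abs_surplusEx_le hN Menu _) (le_trans (le_of_eq ?_) (le_abs_self _))
    refine Finset.sum_congr rfl (fun b _ => ?_)
    rw [Finset.sum_const, Finset.card_univ, Fintype.card_fin, nsmul_eq_mul]
  have hmaxGint : Integrable (fun w : Valuation M => maxAlloc M Menu w) G := by
    have hdomG' : Integrable (fun w : Valuation M => ∑ b ∈ Menu, |w b|) G :=
      integrable_finset_sum _ (fun b _ => (hGint b).abs)
    refine hdomG'.mono (continuous_maxAlloc_val M Menu).measurable.aestronglyMeasurable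
      (Filter.Eventually.of_forall (fun w => ?_))
    rw [Real.norm_eq_abs, Real.norm_eq_abs]
    exact le_trans (abs_maxAlloc_le M Menu w) (le_abs_self _)
  exact integral_mono hseint hmaxGint (fun w => surplusEx_diag_le hN Menu w)

lemma Vsurplus_nonneg (hN : 0 < N) (Menu : Finset (Bundle M))
    (F : Measure (Fin N → Valuation M)) :
    0 ≤ Vsurplus M N Menu F :=
  integral_nonneg (fun v => surplusEx_nonneg hN Menu v)

end Final
/-- rank guarantee with unbounded valuations: with nonnegative (possibly
unbounded) valuations, `N ≥ |𝓜| + 1`, `2 ≤ k ≤ N`, `𝔾` a nonempty set of Borel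
probability measures on valuations with finite means, and `𝔽 = {F : F̄ ∈ 𝔾}`,
`inf_{F∈𝔽} E_F[R^k_𝓜(v)] ≥ inf_{F∈𝔽} V_𝓜(F) − sup_{G∈𝔾} ∑_{b∈𝓜} ∫_{v_b ≥ Q_b(G)} v_b dG`. -/
theorem rank_guarantee_unbounded_support
    (M N : ℕ) (hM : 1 ≤ M)
    (Menu : Finset (Bundle M)) (hMenu : IsMenu M Menu)
    (hN : Menu.card + 1 ≤ N) (k : ℕ) (hk2 : 2 ≤ k) (hkN : k ≤ N)
    (GG : Set (Measure (Valuation M))) (hGGne : GG.Nonempty)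
    (hGGprob : ∀ G ∈ GG, IsProbabilityMeasure G ∧ G {w | IsValuationNN M w} = 1)
    (hGGint : ∀ G ∈ GG, ∀ b : Bundle M, Integrable (fun w : Valuation M => w b) G)
    (hbdd : BddAbove ((fun G : Measure (Valuation M) => ∑ b ∈ Menu,
        ∫ w in {w : Valuation M | quantileQ M N k G b ≤ w b}, w b ∂G) '' GG)) :
    sInf ((fun F => ∫ v, rankGuarantee M N Menu v k ∂F) ''
        {F : Measure (Fin N → Valuation M) |
          (IsProbabilityMeasure F ∧ F {v | ∀ n, IsValuationNN M (v n)} = 1) ∧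
          avgMarginal M N F ∈ GG}) ≥
      sInf ((fun F => Vsurplus M N Menu F) ''
        {F : Measure (Fin N → Valuation M) |
          (IsProbabilityMeasure F ∧ F {v | ∀ n, IsValuationNN M (v n)} = 1) ∧
          avgMarginal M N F ∈ GG})
        - sSup ((fun G : Measure (Valuation M) => ∑ b ∈ Menu,
            ∫ w in {w : Valuation M | quantileQ M N k G b ≤ w b}, w b ∂G) '' GG) := by
  classical
  have hMenuCard : 1 ≤ Menu.card := Finset.card_pos.2 hMenu.1
  have hN0 : 0 < N := by omega
  have hdiagmem : ∀ G ∈ GG,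
      (G.map (fun w => (fun _ : Fin N => w))) ∈
        {F : Measure (Fin N → Valuation M) |
          (IsProbabilityMeasure F ∧ F {v | ∀ n, IsValuationNN M (v n)} = 1) ∧
          avgMarginal M N F ∈ GG} := by
    intro G hG
    obtain ⟨hGp, hGs⟩ := hGGprob G hG
    haveI := hGp
    refine ⟨⟨map_diag_prob G, map_diag_supp hN0 G hGs⟩, ?_⟩
    rw [avgMarginal_map_diag hN0 G]
    exact hG
  obtain ⟨G₀, hG₀⟩ := hGGne
  have hAne : ((fun F => ∫ v, rankGuarantee M N Menu v k ∂F) ''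
      {F : Measure (Fin N → Valuation M) |
        (IsProbabilityMeasure F ∧ F {v | ∀ n, IsValuationNN M (v n)} = 1) ∧
        avgMarginal M N F ∈ GG}).Nonempty :=
    ⟨_, ⟨_, hdiagmem G₀ hG₀, rfl⟩⟩
  have hBbdd : BddBelow ((fun F => Vsurplus M N Menu F) ''
      {F : Measure (Fin N → Valuation M) |
        (IsProbabilityMeasure F ∧ F {v | ∀ n, IsValuationNN M (v n)} = 1) ∧
        avgMarginal M N F ∈ GG}) := by
    refine ⟨0, ?_⟩
    rintro y ⟨F, -, rfl⟩
    exact Vsurplus_nonneg hN0 Menu F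
  rw [ge_iff_le]
  refine le_csInf hAne ?_
  rintro a ⟨F, ⟨⟨hFp, hFs⟩, hFG⟩, rfl⟩
  rw [sub_le_iff_le_add]
  haveI := hFp
  obtain ⟨hGp, hGs⟩ := hGGprob _ hFG
  haveI := hGp
  have hGint := hGGint _ hFG
  have h1 : sInf ((fun F => Vsurplus M N Menu F) ''
      {F : Measure (Fin N → Valuation M) |
        (IsProbabilityMeasure F ∧ F {v | ∀ n, IsValuationNN M (v n)} = 1) ∧
        avgMarginal M N F ∈ GG})
      ≤ Vsurplus M N Menu ((avgMarginal M N F).map (fun w => (fun _ : Fin N => w))) :=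
    csInf_le hBbdd ⟨_, hdiagmem _ hFG, rfl⟩
  have h2 := Vsurplus_map_diag_le hN0 Menu (avgMarginal M N F) hGint
  have h3 := main_integral_ineq hk2 hkN hN0 Menu F hFs hGp hGs hGint
  have h4 : (∑ b ∈ Menu, ∫ w in {w : Valuation M |
        quantileQ M N k (avgMarginal M N F) b ≤ w b}, w b ∂(avgMarginal M N F))
      ≤ sSup ((fun G : Measure (Valuation M) => ∑ b ∈ Menu,
          ∫ w in {w : Valuation M | quantileQ M N k G b ≤ w b}, w b ∂G) '' GG) :=
    le_csSup hbdd ⟨_, hFG, rfl⟩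
  linarith

end RankGuaranteedAuctions
end
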